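/- Let k ≥ 3, let θ be a nontrivial equivalence relation on E_k, and let ρ ⊆ E_k² be a partial order on E_k having a least element and a greatest element. Then Pol(θ) ∩ Pol(ρ) is not maximal in Pol(θ). -/

import Mathlib

/-- A finitary operation on `Fin k`: a pair of an arity `n` and a function
`(Fin n → Fin k) → Fin k`. -/
abbrev Ops (k : ℕ) := Σ n : ℕ, ((Fin n → Fin k) → Fin k)

/-- The set of finitary operations preserving a binary relation `θ` on `Fin k`. -/
def PolB {k : ℕ} (θ : Set (Fin k × Fin k)) : Set (Ops k) :=
  {f | ∀ a b : Fin f.1 → Fin k, (∀ i, (a i, b i) ∈ θ) → (f.2 a, f.2 b) ∈ θ}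

/-- The set of finitary operations preserving an `h`-ary relation `ρ` on `Fin k`. -/
def PolH {k h : ℕ} (ρ : Set (Fin h → Fin k)) : Set (Ops k) :=
  {f | ∀ M : Fin h → Fin f.1 → Fin k,
    (∀ i, (fun j => M j i) ∈ ρ) → (fun j => f.2 (M j)) ∈ ρ}

/-- A clone: contains all projections and is closed under composition. -/
def IsClone {k : ℕ} (C : Set (Ops k)) : Prop :=
  (∀ (n : ℕ) (i : Fin n), (⟨n, fun x => x i⟩ : Ops k) ∈ C) ∧
  (∀ (n m : ℕ) (f : (Fin n → Fin k) → Fin k) (g : Fin n → (Fin m → Fin k) → Fin k),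
    (⟨n, f⟩ : Ops k) ∈ C → (∀ i, (⟨m, g i⟩ : Ops k) ∈ C) →
    (⟨m, fun x => f fun i => g i x⟩ : Ops k) ∈ C)

/-- `C` is maximal in `D`: `C ⊊ D` and no clone lies strictly between them. -/
def MaximalIn {k : ℕ} (C D : Set (Ops k)) : Prop :=
  C ⊂ D ∧ ∀ F : Set (Ops k), IsClone F → ¬(C ⊂ F ∧ F ⊂ D)

/-- `θ` is an equivalence relation (as a set of pairs). -/
def IsEquivRel {A : Type*} (θ : Set (A × A)) : Prop :=
  (∀ a, (a, a) ∈ θ) ∧ (∀ a b, (a, b) ∈ θ → (b, a) ∈ θ) ∧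
    (∀ a b c, (a, b) ∈ θ → (b, c) ∈ θ → (a, c) ∈ θ)

/-- The diagonal relation `Δ` on `Fin k`. -/
def diag (k : ℕ) : Set (Fin k × Fin k) := {p | p.1 = p.2}

/-- A nontrivial equivalence relation: `Δ ⊊ θ ⊊ (Fin k)²`. -/
def NontrivEquiv {k : ℕ} (θ : Set (Fin k × Fin k)) : Prop :=
  IsEquivRel θ ∧ diag k ⊂ θ ∧ θ ⊂ Set.univ

/-- Relational composition `α ∘ β = {(a,c) : ∃ b, (a,b) ∈ α ∧ (b,c) ∈ β}`. -/
def relComp {k : ℕ} (α β : Set (Fin k × Fin k)) : Set (Fin k × Fin k) :=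
  {p | ∃ b, (p.1, b) ∈ α ∧ (b, p.2) ∈ β}

/-- The set of equivalence classes of `θ`. -/
def classesOf {A : Type*} (θ : Set (A × A)) : Set (Set A) :=
  {S | ∃ a : A, S = {b | (a, b) ∈ θ}}

/-- Totally reflexive: every tuple with a repeated entry is in `ρ`. -/
def TotallyReflexive {k h : ℕ} (ρ : Set (Fin h → Fin k)) : Prop :=
  ∀ v : Fin h → Fin k, (∃ i j : Fin h, i ≠ j ∧ v i = v j) → v ∈ ρ

/-- Totally symmetric: closed under all permutations of coordinates. -/
def TotallySymmetric {k h : ℕ} (ρ : Set (Fin h → Fin k)) : Prop :=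
  ∀ (v : Fin h → Fin k) (σ : Equiv.Perm (Fin h)), v ∈ ρ → v ∘ ⇑σ ∈ ρ

/-- The center of an `h`-ary relation: elements `a` such that every tuple whose
first coordinate is `a` lies in `ρ`. -/
def center {k h : ℕ} (ρ : Set (Fin h → Fin k)) : Set (Fin k) :=
  {a | ∀ v : Fin h → Fin k, (∀ i : Fin h, (i : ℕ) = 0 → v i = a) → v ∈ ρ}

/-- An `h`-ary central relation. -/
def IsCentralRel {k h : ℕ} (ρ : Set (Fin h → Fin k)) : Prop :=
  ρ ≠ Set.univ ∧ TotallyReflexive ρ ∧ TotallySymmetric ρ ∧ (center ρ).Nonempty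

/-- `η = {(u₁,…,u_h) : (u₁,u₂) ∈ θ}` (0-indexed: first two coordinates θ-related). -/
def eta {k : ℕ} (h : ℕ) (θ : Set (Fin k × Fin k)) : Set (Fin h → Fin k) :=
  {v | ∀ i j : Fin h, (i : ℕ) = 0 → (j : ℕ) = 1 → (v i, v j) ∈ θ}

/-- `ρ_{l,θ}`: tuples whose coordinates from position `l` onwards can be moved
inside their θ-classes so as to land in `ρ` (0-indexed coordinates). -/
def rhoTh {k h : ℕ} (l : ℕ) (θ : Set (Fin k × Fin k)) (ρ : Set (Fin h → Fin k)) :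
    Set (Fin h → Fin k) :=
  {a | ∃ u : Fin h → Fin k, (∀ j : Fin h, l ≤ (j : ℕ) → (u j, a j) ∈ θ) ∧
    (fun j : Fin h => if (j : ℕ) < l then a j else u j) ∈ ρ}

/-- `ρ` is θ-closed: `ρ = ρ_{0,θ}`. -/
def ThetaClosed {k h : ℕ} (θ : Set (Fin k × Fin k)) (ρ : Set (Fin h → Fin k)) : Prop :=
  ρ = rhoTh 0 θ ρ

/-- `γ_σ = {(a_{σ(1)},…,a_{σ(h)}) : a ∈ γ}`. -/
def permuted {k h : ℕ} (σ : Equiv.Perm (Fin h)) (γ : Set (Fin h → Fin k)) :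
    Set (Fin h → Fin k) :=
  {w | w ∘ ⇑σ.symm ∈ γ}

/-- A transversal of order `l` for the θ-classes: a system of representatives
(pairwise θ-unrelated, meeting every class) such that every tuple whose
coordinates from position `l` onwards lie in `T` belongs to `ρ`. -/
def IsTransversal {k h : ℕ} (θ : Set (Fin k × Fin k)) (ρ : Set (Fin h → Fin k)) (l : ℕ)
    (T : Set (Fin k)) : Prop :=
  (∀ u ∈ T, ∀ v ∈ T, u ≠ v → (u, v) ∉ θ) ∧
  (∀ a : Fin k, ∃ u ∈ T, (a, u) ∈ θ) ∧
  (∀ w : Fin h → Fin k, (∀ j : Fin h, l ≤ (j : ℕ) → w j ∈ T) → w ∈ ρ)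

/-- `ρ` is weakly θ-closed of order `l` (`1 ≤ l ≤ h-1`). -/
def WeaklyThetaClosed {k h : ℕ} (θ : Set (Fin k × Fin k)) (ρ : Set (Fin h → Fin k))
    (l : ℕ) : Prop :=
  1 ≤ l ∧ l ≤ h - 1 ∧ (∃ T : Set (Fin k), IsTransversal θ ρ (l - 1) T) ∧
  ρ = ⋂ σ : Equiv.Perm (Fin h), permuted σ (rhoTh l θ ρ)

/-- Type I: `η ⊆ ρ` and every θ-class contains a central element of `ρ`. -/
def TypeI {k h : ℕ} (θ : Set (Fin k × Fin k)) (ρ : Set (Fin h → Fin k)) : Prop :=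
  eta h θ ⊆ ρ ∧ ∀ a : Fin k, ∃ c : Fin k, (a, c) ∈ θ ∧ c ∈ center ρ

/-- Type II: `ρ` is θ-closed. -/
def TypeII {k h : ℕ} (θ : Set (Fin k × Fin k)) (ρ : Set (Fin h → Fin k)) : Prop :=
  ThetaClosed θ ρ

/-- Type III: `ρ` is weakly θ-closed of some order and `η ⊆ ρ`. -/
def TypeIII {k h : ℕ} (θ : Set (Fin k × Fin k)) (ρ : Set (Fin h → Fin k)) : Prop :=
  (∃ l : ℕ, WeaklyThetaClosed θ ρ l) ∧ eta h θ ⊆ ρ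

/-- `τ` is a diagonal relation through `θ`. -/
def IsDiagonal {k h : ℕ} (θ : Set (Fin k × Fin k)) (τ : Set (Fin h → Fin k)) : Prop :=
  ∃ (ε₁ : Setoid (Fin h)) (ε₂ : Set (Fin h × Fin h)),
    (∀ p ∈ ε₂, (∀ j, ε₁.r p.1 j → p.1 ≤ j) ∧ (∀ j, ε₁.r p.2 j → p.2 ≤ j)) ∧
    (∀ i : Fin h, (∀ j, ε₁.r i j → i ≤ j) → (i, i) ∈ ε₂) ∧
    (∀ i j, (i, j) ∈ ε₂ → (j, i) ∈ ε₂) ∧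
    (∀ i j l, (i, j) ∈ ε₂ → (j, l) ∈ ε₂ → (i, l) ∈ ε₂) ∧
    τ = {a | (∀ i j, ε₁.r i j → a i = a j) ∧ (∀ i j, (i, j) ∈ ε₂ → (a i, a j) ∈ θ)}

/-- `ρ^l_{0,θ}`: `l`-tuples which can be moved inside their θ-classes so that
every `h`-tuple with all entries among the moved elements lies in `ρ`. -/
def rhoPow {k h : ℕ} (l : ℕ) (θ : Set (Fin k × Fin k)) (ρ : Set (Fin h → Fin k)) :
    Set (Fin l → Fin k) :=
  {u | ∃ e : Fin l → Fin k, (∀ i, (e i, u i) ∈ θ) ∧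
    ∀ w : Fin h → Fin k, (∀ j, ∃ i, w j = e i) → w ∈ ρ}

/-- An `h`-regular family of equivalence relations. -/
def IsHRegFamily {A : Type*} (h : ℕ) {m : ℕ} (T : Fin m → Set (A × A)) : Prop :=
  (∀ i, IsEquivRel (T i)) ∧
  (∀ i, (classesOf (T i)).ncard = h) ∧
  (∀ x : Fin m → A, (⋂ i, {b | (x i, b) ∈ T i}).Nonempty)

/-- The `h`-regular relation determined by the family `T`: tuples whose set of
components meets at most `h-1` classes of each member of the family. -/
def hRegRel {A : Type*} (h : ℕ) {m : ℕ} (T : Fin m → Set (A × A)) : Set (Fin h → A) :=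
  {a | ∀ i : Fin m, {S ∈ classesOf (T i) | ∃ j : Fin h, a j ∈ S}.ncard ≤ h - 1}

/-- `ρ` is an `h`-regular relation: determined by some `h`-regular family. -/
def IsHRegularRel {A : Type*} (h : ℕ) (ρ : Set (Fin h → A)) : Prop :=
  ∃ m : ℕ, 1 ≤ m ∧ ∃ T : Fin m → Set (A × A), IsHRegFamily h T ∧ ρ = hRegRel h T


lemma polB_isClone {k : ℕ} (γ : Set (Fin k × Fin k)) : IsClone (PolB γ) := by
  constructor
  · intro n i a b h; exact h i
  · intro n m f g hf hg a b h
    exact hf (fun i => g i a) (fun i => g i b) (fun i => hg i a b h)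

lemma inter_isClone {k : ℕ} {C D : Set (Ops k)} (hC : IsClone C) (hD : IsClone D) :
    IsClone (C ∩ D) :=
  ⟨fun n i => ⟨hC.1 n i, hD.1 n i⟩,
   fun n m f g hf hg => ⟨hC.2 n m f g hf.1 (fun i => (hg i).1),
     hD.2 n m f g hf.2 (fun i => (hg i).2)⟩⟩

/-- If `θ` is a nontrivial equivalence relation and `ρ` is a partial order with
least and greatest elements on `E_k` (`k ≥ 3`), then `Pol(θ) ∩ Pol(ρ)` is not
maximal in `Pol(θ)`. -/
theorem stmt0 (k : ℕ) (hk : 3 ≤ k)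
    (θ : Set (Fin k × Fin k)) (hθ : NontrivEquiv θ)
    (ρ : Set (Fin k × Fin k))
    (hrefl : ∀ a, (a, a) ∈ ρ)
    (hantisymm : ∀ a b, (a, b) ∈ ρ → (b, a) ∈ ρ → a = b)
    (htrans : ∀ a b c, (a, b) ∈ ρ → (b, c) ∈ ρ → (a, c) ∈ ρ)
    (hbot : ∃ e : Fin k, ∀ x, (e, x) ∈ ρ)
    (htop : ∃ e : Fin k, ∀ x, (x, e) ∈ ρ) :
    ¬ MaximalIn (PolB θ ∩ PolB ρ) (PolB θ) := by
  classical
  obtain ⟨e0, h0⟩ := hbot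
  obtain ⟨e1, h1⟩ := htop
  obtain ⟨⟨hrf, hsy, htr⟩, hdiag, huniv⟩ := hθ
  have h01 : e0 ≠ e1 := by
    intro h
    have hall : ∀ x : Fin k, x = e0 := fun x => hantisymm x e0 (h ▸ h1 x) (h0 x)
    have h2 : (⟨0, by omega⟩ : Fin k) = ⟨1, by omega⟩ :=
      (hall _).trans (hall _).symm
    simp [Fin.ext_iff] at h2
  obtain ⟨q, -, hq⟩ := Set.exists_of_ssubset huniv
  have hrholess : ∃ x y : Fin k, (x, y) ∈ ρ ∧ (x, y) ∉ θ := by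
    by_contra hcon
    push_neg at hcon
    apply hq
    have h0x : ∀ x, (e0, x) ∈ θ := fun x => hcon e0 x (h0 x)
    exact htr _ _ _ (hsy _ _ (h0x q.1)) (h0x q.2)
  obtain ⟨x0, y0, hxyρ, hxyθ⟩ := hrholess
  rintro ⟨hsub, hmax⟩
  by_cases hB : ∃ a b : Fin k, (a, b) ∈ ρ ∧ (a, b) ∈ θ ∧ a ≠ b
  · -- Case B: some θ-class contains a nontrivial ρ-pair; use Pol θ ∩ Pol (ρ ∩ θ)
    obtain ⟨a, b, habρ, habθ, habne⟩ := hB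
    set γ : Set (Fin k × Fin k) := ρ ∩ θ with hγdef
    set f : Ops k := ⟨1, fun x => if (x 0, x0) ∈ θ then e1
      else if (x 0, y0) ∈ θ then e0 else x 0⟩ with hfdef
    set g : Ops k := ⟨1, fun x => if x 0 = a then b
      else if x 0 = b then a else x 0⟩ with hgdef
    have hfθ : f ∈ PolB θ := by
      intro u v hc
      have hzw : (u 0, v 0) ∈ θ := hc 0
      have hs : (u 0, x0) ∈ θ ↔ (v 0, x0) ∈ θ :=
        ⟨fun h => htr _ _ _ (hsy _ _ hzw) h, fun h => htr _ _ _ hzw h⟩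
      have ht : (u 0, y0) ∈ θ ↔ (v 0, y0) ∈ θ :=
        ⟨fun h => htr _ _ _ (hsy _ _ hzw) h, fun h => htr _ _ _ hzw h⟩
      show ((if (u 0, x0) ∈ θ then e1 else if (u 0, y0) ∈ θ then e0 else u 0),
        (if (v 0, x0) ∈ θ then e1 else if (v 0, y0) ∈ θ then e0 else v 0)) ∈ θ
      split_ifs <;> first | exact hrf _ | exact hzw | tauto
    have hfγ : f ∈ PolB γ := by
      intro u v hc
      have hzw : (u 0, v 0) ∈ θ := (hc 0).2
      have hs : (u 0, x0) ∈ θ ↔ (v 0, x0) ∈ θ :=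
        ⟨fun h => htr _ _ _ (hsy _ _ hzw) h, fun h => htr _ _ _ hzw h⟩
      have ht : (u 0, y0) ∈ θ ↔ (v 0, y0) ∈ θ :=
        ⟨fun h => htr _ _ _ (hsy _ _ hzw) h, fun h => htr _ _ _ hzw h⟩
      show ((if (u 0, x0) ∈ θ then e1 else if (u 0, y0) ∈ θ then e0 else u 0),
        (if (v 0, x0) ∈ θ then e1 else if (v 0, y0) ∈ θ then e0 else v 0)) ∈ γ
      split_ifs <;> first | exact ⟨hrefl _, hrf _⟩ | exact hc 0 | tauto
    have hfnotρ : f ∉ PolB ρ := by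
      intro hf
      have := hf (fun _ => x0) (fun _ => y0) (fun _ => hxyρ)
      change ((if (x0, x0) ∈ θ then e1 else if (x0, y0) ∈ θ then e0 else x0),
        (if (y0, x0) ∈ θ then e1 else if (y0, y0) ∈ θ then e0 else y0)) ∈ ρ at this
      rw [if_pos (hrf x0), if_neg (fun h => hxyθ (hsy _ _ h)),
        if_pos (hrf y0)] at this
      exact h01 (hantisymm e0 e1 (h0 e1) this)
    have hgθ : g ∈ PolB θ := by
      have hgz : ∀ z : Fin k,
          ((if z = a then b else if z = b then a else z), z) ∈ θ := by
        intro z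
        split_ifs with h1' h2'
        · exact h1' ▸ hsy _ _ habθ
        · exact h2' ▸ habθ
        · exact hrf _
      intro u v hc
      show ((if u 0 = a then b else if u 0 = b then a else u 0),
        (if v 0 = a then b else if v 0 = b then a else v 0)) ∈ θ
      exact htr _ _ _ (htr _ _ _ (hgz (u 0)) (hc 0)) (hsy _ _ (hgz (v 0)))
    have hgnotγ : g ∉ PolB γ := by
      intro hg
      have hval : (g.2 (fun _ => a), g.2 (fun _ => b)) = (b, a) := by
        show ((if a = a then b else if a = b then a else a),
          (if b = a then b else if b = b then a else b)) = (b, a)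
        simp [hgdef, habne.symm]
      have h2 : (b, a) ∈ γ :=
        hval ▸ hg (fun _ => a) (fun _ => b) (fun _ => ⟨habρ, habθ⟩)
      exact habne (hantisymm a b habρ h2.1)
    refine hmax (PolB θ ∩ PolB γ)
      (inter_isClone (polB_isClone θ) (polB_isClone γ)) ⟨?_, ?_⟩
    · constructor
      · rintro h ⟨hhθ, hhρ⟩
        exact ⟨hhθ, fun u v hc => ⟨hhρ u v (fun i => (hc i).1),
          hhθ u v (fun i => (hc i).2)⟩⟩
      · intro hFC
        exact hfnotρ (hFC ⟨hfθ, hfγ⟩).2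
    · constructor
      · exact Set.inter_subset_left
      · intro hDF
        exact hgnotγ (hDF hgθ).2
  · -- Case A: every nontrivial ρ-pair crosses θ-classes; use Pol θ ∩ Pol (θ∘ρ∘θ)
    push_neg at hB
    set σ : Set (Fin k × Fin k) :=
      {p | ∃ u v, (u, p.1) ∈ θ ∧ (v, p.2) ∈ θ ∧ (u, v) ∈ ρ} with hσdef
    have hθσ : θ ⊆ σ := fun p hp => ⟨p.1, p.1, hrf _, hp, hrefl _⟩
    have hρσ : ρ ⊆ σ := fun p hp => ⟨p.1, p.2, hrf _, hrf _, hp⟩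
    have h01θ : (e0, e1) ∉ θ := fun h => h01 (hB e0 e1 (h0 e1) h)
    have h10σ : (e1, e0) ∉ σ := by
      rintro ⟨u, v, hu, hv, huv⟩
      have hu1 : u = e1 := hB u e1 (h1 u) hu
      have hv1 : v = e1 := hantisymm v e1 (h1 v) (hu1 ▸ huv)
      exact h01θ (hsy _ _ (hv1 ▸ hv))
    obtain ⟨p, hpθ, hpd⟩ := Set.exists_of_ssubset hdiag
    have hpne : p.1 ≠ p.2 := hpd
    have hkey : ∀ z w : Fin k, (z = p.1 ∨ z = p.2) → (w = p.1 ∨ w = p.2) →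
        (z, w) ∈ θ := by
      rintro z w (rfl | rfl) (rfl | rfl)
      · exact hrf _
      · exact hpθ
      · exact hsy _ _ hpθ
      · exact hrf _
    set f : Ops k := ⟨2, fun x => if x 0 = e0 ∧ x 1 = e1 then p.2 else p.1⟩
      with hfdef
    set g : Ops k := ⟨1, fun x => if (x 0, e0) ∈ θ then e1
      else if (x 0, e1) ∈ θ then e0 else x 0⟩ with hgdef
    have hfθ : f ∈ PolB θ := by
      intro u v hc
      show ((if u 0 = e0 ∧ u 1 = e1 then p.2 else p.1),
        (if v 0 = e0 ∧ v 1 = e1 then p.2 else p.1)) ∈ θ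
      apply hkey <;> split_ifs <;> simp
    have hfσ : f ∈ PolB σ := by
      intro u v hc
      apply hθσ
      show ((if u 0 = e0 ∧ u 1 = e1 then p.2 else p.1),
        (if v 0 = e0 ∧ v 1 = e1 then p.2 else p.1)) ∈ θ
      apply hkey <;> split_ifs <;> simp
    have hfnotρ : f ∉ PolB ρ := by
      intro hf
      have := hf (fun _ => e0) (fun i => if i = 1 then e1 else e0) ?_
      · change ((if e0 = e0 ∧ e0 = e1 then p.2 else p.1),
          (if (if (0 : Fin 2) = 1 then e1 else e0) = e0 ∧
            (if (1 : Fin 2) = 1 then e1 else e0) = e1 then p.2 else p.1)) ∈ ρ at this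
        rw [if_neg (by simp [h01]), if_pos (by simp [Fin.ext_iff])] at this
        exact hpne (hB p.1 p.2 this hpθ)
      · intro i
        by_cases hi : i = (1 : Fin 2) <;> simp [hi, h0 e1, hrefl]
    have hgθ : g ∈ PolB θ := by
      intro u v hc
      have hzw : (u 0, v 0) ∈ θ := hc 0
      have hs : (u 0, e0) ∈ θ ↔ (v 0, e0) ∈ θ :=
        ⟨fun h => htr _ _ _ (hsy _ _ hzw) h, fun h => htr _ _ _ hzw h⟩
      have ht : (u 0, e1) ∈ θ ↔ (v 0, e1) ∈ θ :=
        ⟨fun h => htr _ _ _ (hsy _ _ hzw) h, fun h => htr _ _ _ hzw h⟩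
      show ((if (u 0, e0) ∈ θ then e1 else if (u 0, e1) ∈ θ then e0 else u 0),
        (if (v 0, e0) ∈ θ then e1 else if (v 0, e1) ∈ θ then e0 else v 0)) ∈ θ
      split_ifs <;> first | exact hrf _ | exact hzw | tauto
    have hgnotσ : g ∉ PolB σ := by
      intro hg
      have := hg (fun _ => e0) (fun _ => e1) (fun _ => hρσ (h0 e1))
      change ((if (e0, e0) ∈ θ then e1 else if (e0, e1) ∈ θ then e0 else e0),
        (if (e1, e0) ∈ θ then e1 else if (e1, e1) ∈ θ then e0 else e1)) ∈ σ at this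
      rw [if_pos (hrf e0), if_neg (fun h => h01θ (hsy _ _ h)),
        if_pos (hrf e1)] at this
      exact h10σ this
    refine hmax (PolB θ ∩ PolB σ)
      (inter_isClone (polB_isClone θ) (polB_isClone σ)) ⟨?_, ?_⟩
    · constructor
      · rintro h ⟨hhθ, hhρ⟩
        refine ⟨hhθ, ?_⟩
        intro u v hc
        choose w z hw hz hwz using hc
        exact ⟨h.2 w, h.2 z, hhθ w u hw, hhθ z v hz, hhρ w z hwz⟩
      · intro hFC
        exact hfnotρ (hFC ⟨hfθ, hfσ⟩).2
    · constructor
      · exact Set.inter_subset_left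
      · intro hDF
        exact hgnotσ (hDF hgθ).2
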